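/- Every vector u ∈ S^{n−1} that occurs as an outer unit normal vector of a C-pseudo-cone K at some boundary point belongs to cl Ω_{C°}, the closure of S^{n−1} ∩ int C°. -/

import Mathlib

open Set Metric MeasureTheory Filter
open scoped InnerProductSpace Pointwise

noncomputable section

abbrev E (n : ℕ) := EuclideanSpace ℝ (Fin n)

/-- The dual cone `C° = {x : ⟪x,y⟫ ≤ 0 ∀ y ∈ C}`. -/
def dualCone {n : ℕ} (C : Set (E n)) : Set (E n) := {x | ∀ y ∈ C, ⟪x, y⟫_ℝ ≤ 0}

/-- `Ω_C = S^{n-1} ∩ int C`. -/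
def OmegaC {n : ℕ} (C : Set (E n)) : Set (E n) := sphere (0 : E n) 1 ∩ interior C

/-- `Ω_{C°} = S^{n-1} ∩ int C°`. -/
def OmegaCp {n : ℕ} (C : Set (E n)) : Set (E n) := sphere (0 : E n) 1 ∩ interior (dualCone C)

/-- `C` is a closed convex pointed cone with nonempty interior. -/
structure IsPointedCone {n : ℕ} (C : Set (E n)) : Prop where
  closed : IsClosed C
  convex : Convex ℝ C
  cone : ∀ r : ℝ, 0 ≤ r → ∀ x ∈ C, r • x ∈ C
  pointed : C ∩ (-C) = {(0 : E n)}
  intNonempty : (interior C).Nonempty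

/-- `K` is a `C`-pseudo-cone: nonempty, closed, convex, `0 ∉ K`, `K + C = K ⊆ C`. -/
def IsPseudoCone {n : ℕ} (C K : Set (E n)) : Prop :=
  K.Nonempty ∧ IsClosed K ∧ Convex ℝ K ∧ (0 : E n) ∉ K ∧ K + C = K ∧ K ⊆ C

/-- The support function `h_K(u) = sup {⟪u,y⟫ : y ∈ K}`. -/
def suppFn {n : ℕ} (K : Set (E n)) (u : E n) : ℝ := sSup ((fun y => ⟪u, y⟫_ℝ) '' K)

/-- The radial function `ρ_K(v) = min {r > 0 : r v ∈ K}`. -/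
def radialFn {n : ℕ} (K : Set (E n)) (v : E n) : ℝ := sInf {r : ℝ | 0 < r ∧ r • v ∈ K}

/-- `u` is an outer normal vector of `K` at `x`. -/
def IsNormalAt {n : ℕ} (K : Set (E n)) (u x : E n) : Prop :=
  x ∈ K ∧ ∀ y ∈ K, ⟪u, y⟫_ℝ ≤ ⟪u, x⟫_ℝ

/-- The pseudo-subdifferential `∂•K`. -/
def pseudoSubdiff {n : ℕ} (C K : Set (E n)) : Set (E n × E n) :=
  {p | p.1 ∈ OmegaC C ∧ p.2 ∈ OmegaCp C ∧ IsNormalAt K p.2 (radialFn K p.1 • p.1)}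

/- ### Auxiliary lemmas -/

lemma dualCone_convex {n : ℕ} (C : Set (E n)) : Convex ℝ (dualCone C) := by
  intro x hx y hy a b ha hb hab
  intro c hc
  have hxc := hx c hc
  have hyc := hy c hc
  rw [inner_add_left, real_inner_smul_left, real_inner_smul_left]
  nlinarith

lemma dualCone_closed {n : ℕ} (C : Set (E n)) : IsClosed (dualCone C) := by
  have : dualCone C = ⋂ y ∈ C, {x : E n | ⟪x, y⟫_ℝ ≤ 0} := by
    ext x; simp [dualCone, Set.mem_iInter₂]
  rw [this]
  exact isClosed_biInter fun y _ =>
    isClosed_le (Continuous.inner continuous_id continuous_const) continuous_const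

lemma dualCone_smul {n : ℕ} {C : Set (E n)} {r : ℝ} (hr : 0 ≤ r) {y : E n}
    (hy : y ∈ dualCone C) : r • y ∈ dualCone C := by
  intro c hc
  rw [real_inner_smul_left]
  exact mul_nonpos_of_nonneg_of_nonpos hr (hy c hc)

lemma interior_dualCone_smul {n : ℕ} {C : Set (E n)} {r : ℝ} (hr : 0 < r) {y : E n}
    (hy : y ∈ interior (dualCone C)) : r • y ∈ interior (dualCone C) := by
  have h1 : r • y ∈ r • interior (dualCone C) := Set.smul_mem_smul_set hy
  rw [← interior_smul₀ hr.ne' (dualCone C)] at h1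
  exact interior_mono (fun z hz => by
    obtain ⟨d, hd, rfl⟩ := hz
    exact dualCone_smul hr.le hd) h1

lemma zero_mem_of_pointedCone {n : ℕ} {C : Set (E n)} (hC : IsPointedCone C) : (0 : E n) ∈ C := by
  obtain ⟨z, hz⟩ := hC.intNonempty
  have := hC.cone 0 le_rfl z (interior_subset hz)
  simpa using this

lemma bidual_subset {n : ℕ} {C : Set (E n)} (hC : IsPointedCone C) :
    dualCone (dualCone C) ⊆ C := by
  intro x hx
  by_contra hxC
  obtain ⟨f, a, hfa, hax⟩ := geometric_hahn_banach_closed_point hC.convex hC.closed hxC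
  have ha0 : 0 < a := by simpa using hfa 0 (zero_mem_of_pointedCone hC)
  have hfneg : ∀ b ∈ C, f b ≤ 0 := by
    intro b hb
    by_contra hpos
    push_neg at hpos
    have hs : (0 : ℝ) ≤ a / f b := le_of_lt (div_pos ha0 hpos)
    have := hfa ((a / f b) • b) (hC.cone _ hs b hb)
    rw [_root_.map_smul, smul_eq_mul, div_mul_cancel₀ _ hpos.ne'] at this
    exact lt_irrefl a this
  set w := (InnerProductSpace.toDual ℝ (E n)).symm f with hwdef
  have hwf : ∀ y : E n, ⟪w, y⟫_ℝ = f y := fun y =>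
    InnerProductSpace.toDual_symm_apply
  have hw : w ∈ dualCone C := fun c hc => by rw [hwf]; exact hfneg c hc
  have hxw : ⟪x, w⟫_ℝ ≤ 0 := hx w hw
  rw [real_inner_comm, hwf] at hxw
  linarith

lemma interior_dualCone_nonempty {n : ℕ} {C : Set (E n)} (hC : IsPointedCone C) :
    (interior (dualCone C)).Nonempty := by
  by_contra hempty
  rw [Set.not_nonempty_iff_eq_empty] at hempty
  have h0D : (0 : E n) ∈ dualCone C := fun y _ => by simp
  have hspan : affineSpan ℝ (dualCone C) ≠ ⊤ := by
    intro htop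
    rw [← (dualCone_convex C).interior_nonempty_iff_affineSpan_eq_top] at htop
    rw [hempty] at htop
    exact Set.not_nonempty_empty htop
  set W := (affineSpan ℝ (dualCone C)).direction with hWdef
  have hWne : W ≠ ⊤ := by
    intro htop
    exact hspan ((AffineSubspace.direction_eq_top_iff_of_nonempty
      ⟨0, subset_affineSpan ℝ _ h0D⟩).mp htop)
  have hWorth : Wᗮ ≠ ⊥ := by
    intro hbot
    exact hWne (Submodule.orthogonal_eq_bot_iff.mp hbot)
  obtain ⟨v, hvW, hvne⟩ := Submodule.exists_mem_ne_zero_of_ne_bot hWorth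
  have hmemW : ∀ y ∈ dualCone C, y ∈ W := by
    intro y hy
    have := AffineSubspace.vsub_mem_direction (subset_affineSpan ℝ _ hy)
      (subset_affineSpan ℝ _ h0D)
    simpa using this
  have hzero : ∀ y ∈ dualCone C, ⟪v, y⟫_ℝ = 0 := by
    intro y hy
    have := (Submodule.mem_orthogonal W v).mp hvW y (hmemW y hy)
    rwa [real_inner_comm] at this
  have hv1 : v ∈ C := bidual_subset hC (fun y hy => le_of_eq (hzero y hy))
  have hv2 : -v ∈ C := bidual_subset hC (fun y hy => by
    rw [inner_neg_left, hzero y hy, neg_zero])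
  have : v ∈ C ∩ (-C) := ⟨hv1, by simpa [Set.mem_neg] using hv2⟩
  rw [hC.pointed] at this
  exact hvne (by simpa using this)

/-- every outer unit normal vector of a `C`-pseudo-cone belongs to `cl Ω_{C°}`. -/
theorem stmt5 {n : ℕ} (C K : Set (E n)) (hC : IsPointedCone C) (hK : IsPseudoCone C K)
    (u x : E n) (hu : u ∈ sphere (0 : E n) 1) (hnorm : IsNormalAt K u x) :
    u ∈ closure (OmegaCp C) := by
  obtain ⟨-, -, -, -, hKC, -⟩ := hK
  have hunorm : ‖u‖ = 1 := by simpa using hu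
  -- u is in the dual cone
  have hudual : u ∈ dualCone C := by
    intro c hc
    have hxc : x + c ∈ K := by
      rw [← hKC]; exact Set.add_mem_add hnorm.1 hc
    have := hnorm.2 (x + c) hxc
    rw [inner_add_right] at this
    linarith
  obtain ⟨w, hw⟩ := interior_dualCone_nonempty hC
  -- the curve
  set g : ℝ → E n := fun t => ‖t • w + (1 - t) • u‖⁻¹ • (t • w + (1 - t) • u) with hgdef
  have hcont : Tendsto (fun t : ℝ => t • w + (1 - t) • u) (nhds 0) (nhds u) := by
    have : Continuous (fun t : ℝ => t • w + (1 - t) • u) := by continuity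
    have h := this.tendsto 0
    simpa using h
  have htend : Tendsto g (nhdsWithin 0 (Set.Ioi 0)) (nhds u) := by
    have hnorm' : Tendsto (fun t : ℝ => ‖t • w + (1 - t) • u‖⁻¹)
        (nhds 0) (nhds 1) := by
      have h1 := (continuous_norm.tendsto u).comp hcont
      have h2 := h1.inv₀ (by rw [hunorm]; norm_num)
      simpa [hunorm] using h2
    have := hnorm'.smul hcont
    simp only [one_smul] at this
    exact this.mono_left nhdsWithin_le_nhds
  refine mem_closure_of_tendsto htend ?_
  -- eventually in Omega
  have hmem : Set.Ioo (0 : ℝ) (min 1 (1 + ‖w‖)⁻¹) ∈ nhdsWithin (0:ℝ) (Set.Ioi 0) := by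
    apply Ioo_mem_nhdsGT_of_mem
    constructor
    · exact le_refl 0
    · exact lt_min one_pos (by positivity)
  filter_upwards [hmem] with t ht
  obtain ⟨ht0, ht1⟩ := ht
  have htlt1 : t < 1 := lt_of_lt_of_le ht1 (min_le_left _ _)
  have htw : t < (1 + ‖w‖)⁻¹ := lt_of_lt_of_le ht1 (min_le_right _ _)
  set p : E n := t • w + (1 - t) • u with hpdef
  -- p is nonzero
  have hplb : (1 - t) - t * ‖w‖ ≤ ‖p‖ := by
    have h1 : (1 - t) • u = p - t • w := by rw [hpdef]; abel
    have h2 : ‖p - t • w‖ ≤ ‖p‖ + ‖t • w‖ := by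
      calc ‖p - t • w‖ ≤ ‖p‖ + ‖-(t • w)‖ := by rw [sub_eq_add_neg]; exact norm_add_le _ _
      _ = ‖p‖ + ‖t • w‖ := by rw [norm_neg]
    have h3 : ‖(1 - t) • u‖ = 1 - t := by
      rw [norm_smul, hunorm, mul_one, Real.norm_eq_abs, abs_of_pos (by linarith)]
    have h4 : ‖t • w‖ = t * ‖w‖ := by
      rw [norm_smul, Real.norm_eq_abs, abs_of_pos ht0]
    rw [h1] at h3
    linarith
  have hpos : 0 < (1 - t) - t * ‖w‖ := by
    have h5 : t * (1 + ‖w‖) < 1 := by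
      have h6 : 0 < 1 + ‖w‖ := by positivity
      calc t * (1 + ‖w‖) < (1 + ‖w‖)⁻¹ * (1 + ‖w‖) := by
            exact mul_lt_mul_of_pos_right htw h6
      _ = 1 := inv_mul_cancel₀ h6.ne'
    nlinarith
  have hpne : p ≠ 0 := by
    intro h
    rw [h, norm_zero] at hplb
    linarith
  have hpnorm : 0 < ‖p‖ := lt_of_lt_of_le hpos hplb
  -- p in interior of dual cone
  have hpint : p ∈ interior (dualCone C) :=
    (dualCone_convex C).combo_interior_closure_mem_interior hw (subset_closure hudual)
      ht0 (by linarith) (by ring)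
  constructor
  · -- on the sphere
    rw [mem_sphere_zero_iff_norm, hgdef]
    simp only
    rw [norm_smul, norm_inv, norm_norm]
    exact inv_mul_cancel₀ hpnorm.ne'
  · exact interior_dualCone_smul (by positivity) hpint
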